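/- Let T be a densely defined C-selfadjoint operator in a Hilbert space H with polar decomposition T = U|T|. Then there exists an antilinear partial conjugation J (an antilinear partial isometry with J² equal to the orthogonal projection onto the closure of the range of |T|, and ⟨Jf, Jg⟩ = ⟨g, f⟩ on its initial space) such that U = CJ and J commutes with |T| (J|T| = |T|J). -/

import Mathlib

open InnerProductSpace in
/-- A conjugation on a complex inner product space: an antilinear involution
satisfying `⟪Cf, Cg⟫ = ⟪g, f⟫`. -/
structure Conjugation (H : Type*) [NormedAddCommGroup H] [InnerProductSpace ℂ H] where
  toFun : H → H
  map_add' : ∀ x y, toFun (x + y) = toFun x + toFun y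
  map_smul' : ∀ (c : ℂ) (x : H), toFun (c • x) = (starRingEnd ℂ c) • toFun x
  invol : ∀ x, toFun (toFun x) = x
  inner_map : ∀ x y, (inner ℂ (toFun x) (toFun y) : ℂ) = inner ℂ y x

open scoped InnerProductSpace

local notation "⟪" x ", " y "⟫" => @inner ℂ _ _ x y

theorem aux_convex_seq (c : ℕ → ℝ) (K : ℝ) (hb : ∀ n, c n ≤ K)
    (hc : ∀ n, 2 * c (n + 1) ≤ c n + c (n + 2)) : c 1 ≤ c 0 := by
  by_contra h
  push_neg at h
  set ε := c 1 - c 0 with hε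
  have hε0 : 0 < ε := by simp [hε]; linarith
  have hd : ∀ n, ε ≤ c (n + 1) - c n := by
    intro n
    induction n with
    | zero => simp [hε]
    | succ n ih => have := hc n; linarith
  have hgrow : ∀ n : ℕ, c 0 + n * ε ≤ c n := by
    intro n
    induction n with
    | zero => simp
    | succ n ih => have := hd n; push_cast; linarith
  obtain ⟨n, hn⟩ := exists_nat_gt ((K - c 0) / ε)
  have h1 : K - c 0 < n * ε := by rw [div_lt_iff₀ hε0] at hn; linarith
  have := hgrow n
  have := hb n
  linarith

/-- `T` is `C`-symmetric: `T ⊆ C T* C`. -/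
noncomputable def CSymmetric {H : Type*} [NormedAddCommGroup H] [InnerProductSpace ℂ H]
    [CompleteSpace H] (C : Conjugation H) (T : H →ₗ.[ℂ] H) : Prop :=
  ∀ x : T.domain, ∃ hx : C.toFun x ∈ T.adjoint.domain,
    C.toFun (T.adjoint ⟨C.toFun x, hx⟩) = T x

/-- `T` is `C`-selfadjoint: `T = C T* C`. -/
noncomputable def CSelfAdjoint {H : Type*} [NormedAddCommGroup H] [InnerProductSpace ℂ H]
    [CompleteSpace H] (C : Conjugation H) (T : H →ₗ.[ℂ] H) : Prop :=
  CSymmetric C T ∧ ∀ y : H, C.toFun y ∈ T.adjoint.domain → y ∈ T.domain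

/-- Composition of partially defined linear maps, with its natural (maximal) domain. -/
noncomputable def LinearPMap.pcomp {R E F G : Type*} [Ring R] [AddCommGroup E] [Module R E]
    [AddCommGroup F] [Module R F] [AddCommGroup G] [Module R G]
    (g : F →ₗ.[R] G) (f : E →ₗ.[R] F) : E →ₗ.[R] G :=
  g.comp (f.domRestrict ((g.domain.comap f.toFun).map f.domain.subtype))
    (by
      rintro ⟨x, hx⟩
      obtain ⟨y, hy, hyx⟩ := hx.1
      have h := LinearPMap.domRestrict_apply (f := f) (x := ⟨x, hx⟩) (y := y) (by exact hyx.symm)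
      erw [h]; exact hy)

/-- Natural powers of a partially defined linear map, `T^(n+1) = T ∘ T^n`, with
`T^0` the identity on the whole space. -/
noncomputable def LinearPMap.ppow {R E : Type*} [Ring R] [AddCommGroup E] [Module R E]
    (T : E →ₗ.[R] E) : ℕ → E →ₗ.[R] E
  | 0 => ⟨⊤, (⊤ : Submodule R E).subtype⟩
  | n + 1 => T.pcomp (T.ppow n)

section Main

variable {H : Type*} [NormedAddCommGroup H] [InnerProductSpace ℂ H] [CompleteSpace H]

namespace ConjAux

variable (C : Conjugation H)

theorem C_zero : C.toFun 0 = 0 := by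
  have := C.map_smul' 0 0; simpa using this

theorem C_neg (x : H) : C.toFun (-x) = -C.toFun x := by
  have := C.map_smul' (-1) x; simpa using this

theorem C_sub (x y : H) : C.toFun (x - y) = C.toFun x - C.toFun y := by
  rw [sub_eq_add_neg, C.map_add', C_neg, sub_eq_add_neg]

theorem C_norm (x : H) : ‖C.toFun x‖ = ‖x‖ := by
  have h := C.inner_map x x
  rw [inner_self_eq_norm_sq_to_K, inner_self_eq_norm_sq_to_K] at h
  have h2 : ‖C.toFun x‖ ^ 2 = ‖x‖ ^ 2 := by exact_mod_cast h
  nlinarith [norm_nonneg (C.toFun x), norm_nonneg x]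

theorem C_cont : Continuous C.toFun := by
  have : Isometry C.toFun := by
    intro x y
    rw [edist_dist, edist_dist, dist_eq_norm, dist_eq_norm, ← C_sub, C_norm]
  exact this.continuous

theorem C_inner_left (x z : H) : ⟪C.toFun x, z⟫ = ⟪C.toFun z, x⟫ := by
  have := C.inner_map x (C.toFun z)
  rwa [C.invol] at this

theorem C_inner_right (x z : H) : ⟪x, C.toFun z⟫ = ⟪z, C.toFun x⟫ := by
  rw [← inner_conj_symm, C_inner_left, inner_conj_symm]

end ConjAux

end Main


/-- if `T` is densely defined and `C`-selfadjoint with polar decomposition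
`T = U |T|` (here `R = |T|` is the positive selfadjoint factor and `U` is the partial
isometry with initial space the closure of `ran |T|` and kernel `ker T`, which
characterizes the polar decomposition uniquely), then there is an antilinear partial
conjugation `J` with `U = C J` and `J |T| = |T| J`. -/
theorem stmt_5 {H : Type*} [NormedAddCommGroup H] [InnerProductSpace ℂ H] [CompleteSpace H]
    (C : Conjugation H) (T R : H →ₗ.[ℂ] H) (U : H →L[ℂ] H)
    (hdense : Dense (T.domain : Set H)) (hCsa : CSelfAdjoint C T)
    -- `R` plays the role of `|T|`: a positive selfadjoint operator
    (hRsa : R.adjoint = R)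
    (hRpos : ∀ x : R.domain, 0 ≤ ((inner ℂ (x : H) (R x) : ℂ)).re)
    -- `U` is a partial isometry with initial space `closure (ran R)`,
    -- vanishing on its orthogonal complement
    (hUiso : ∀ x ∈ (LinearMap.range R.toFun).topologicalClosure, ‖U x‖ = ‖x‖)
    (hUker : ∀ x ∈ ((LinearMap.range R.toFun).topologicalClosure : Submodule ℂ H)ᗮ, U x = 0)
    -- `T = U R`, including equality of domains
    (hdom : T.domain = R.domain)
    (hTUR : ∀ (x : T.domain) (hx : (x : H) ∈ R.domain), (T x : H) = U (R ⟨x, hx⟩)) :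
    ∃ J : H → H,
      -- `J` is antilinear
      (∀ x y, J (x + y) = J x + J y) ∧
      (∀ (c : ℂ) (x : H), J (c • x) = (starRingEnd ℂ c) • J x) ∧
      -- `J` is a partial conjugation with initial space `closure (ran |T|)`:
      -- it is antiunitary there, vanishes on the orthogonal complement, and
      -- `J²` is the orthogonal projection onto `closure (ran |T|)`
      (∀ f ∈ (LinearMap.range R.toFun).topologicalClosure,
        ∀ g ∈ (LinearMap.range R.toFun).topologicalClosure,
          (inner ℂ (J f) (J g) : ℂ) = inner ℂ g f) ∧
      (∀ x ∈ ((LinearMap.range R.toFun).topologicalClosure : Submodule ℂ H)ᗮ, J x = 0) ∧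
      (∀ x ∈ (LinearMap.range R.toFun).topologicalClosure, J (J x) = x) ∧
      (∀ x ∈ ((LinearMap.range R.toFun).topologicalClosure : Submodule ℂ H)ᗮ, J (J x) = 0) ∧
      -- `U = C J`
      (∀ x : H, U x = C.toFun (J x)) ∧
      -- `J` commutes with `|T|`:  `J |T| = |T| J`
      (∀ x : H, x ∈ R.domain ↔ J x ∈ R.domain) ∧
      (∀ (x : R.domain) (hx : J x ∈ R.domain), J (R x) = R ⟨J x, hx⟩) := by
    classical
  haveI hOP : Submodule.HasOrthogonalProjection ((LinearMap.range R.toFun).topologicalClosure) :=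
    inferInstance
  set M : Submodule ℂ H := (LinearMap.range R.toFun).topologicalClosure with hMdef
  set adjU : H →L[ℂ] H := ContinuousLinearMap.adjoint U with hadjUdef
  have hdense' : Dense (R.domain : Set H) := by rw [← hdom]; exact hdense
  -- C basics
  have hC0 : C.toFun 0 = 0 := ConjAux.C_zero C
  have hCnorm : ∀ x, ‖C.toFun x‖ = ‖x‖ := ConjAux.C_norm C
  have hCcont : Continuous C.toFun := ConjAux.C_cont C
  have hCC : ∀ x, C.toFun (C.toFun x) = x := C.invol
  have hCinnL : ∀ x z : H, ⟪C.toFun x, z⟫ = ⟪C.toFun z, x⟫ := ConjAux.C_inner_left C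
  have hCinnR : ∀ x z : H, ⟪x, C.toFun z⟫ = ⟪z, C.toFun x⟫ := ConjAux.C_inner_right C
  have hCinner : ∀ x y : H, ⟪C.toFun x, C.toFun y⟫ = ⟪y, x⟫ := C.inner_map
  -- adjoint of U
  have hadj_l : ∀ x y : H, ⟪adjU x, y⟫ = ⟪x, U y⟫ := by
    intro x y; rw [hadjUdef]; exact ContinuousLinearMap.adjoint_inner_left U y x
  have hadj_r : ∀ x y : H, ⟪x, adjU y⟫ = ⟪U x, y⟫ := by
    intro x y; rw [hadjUdef]; exact ContinuousLinearMap.adjoint_inner_right U x y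
  -- membership transport
  have hmem : ∀ {x : H}, x ∈ T.domain ↔ x ∈ R.domain := fun {x} => by rw [hdom]
  have Rcongr : ∀ {a b : H} (_ : a = b) (ha : a ∈ R.domain) (hb : b ∈ R.domain),
      R ⟨a, ha⟩ = R ⟨b, hb⟩ := by
    intro a b h ha hb; cases h; rfl
  -- range facts
  have hranR : ∀ v : R.domain, (R v : H) ∈ M := fun v =>
    (LinearMap.range R.toFun).le_topologicalClosure ⟨v, rfl⟩
  have horth2 : Mᗮᗮ = M := Submodule.orthogonal_orthogonal M
  have hMorth : Mᗮ = (LinearMap.range R.toFun)ᗮ := by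
    rw [hMdef, ← Submodule.orthogonal_orthogonal_eq_closure,
      Submodule.triorthogonal_eq_orthogonal]
  -- U basics
  have hUinner : ∀ x y : H, x ∈ M → y ∈ M → ⟪U x, U y⟫ = ⟪x, y⟫ := by
    intro x y hx hy
    let f : M →ₗᵢ[ℂ] H := ⟨U.toLinearMap.comp M.subtype, fun m => hUiso m m.2⟩
    have := f.inner_map_map ⟨x, hx⟩ ⟨y, hy⟩
    exact this
  have hadjM : ∀ z : H, adjU z ∈ M := by
    intro z
    rw [← horth2, Submodule.mem_orthogonal]
    intro u hu
    rw [hadj_r, hUker u hu, inner_zero_left]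
  have hUUadj : ∀ x ∈ M, adjU (U x) = x := by
    intro x hx
    have hd : adjU (U x) - x ∈ M := Submodule.sub_mem M (hadjM _) hx
    have hz : ∀ u ∈ M, ⟪u, adjU (U x) - x⟫ = 0 := by
      intro u hu
      rw [inner_sub_right, hadj_r, hUinner u x hu hx, sub_self]
    have h0 := hz _ hd
    rw [inner_self_eq_zero] at h0
    exact sub_eq_zero.1 h0
  -- R symmetric
  have hRF : R.IsFormalAdjoint R := by
    have := LinearPMap.adjoint_isFormalAdjoint hdense'
    rwa [hRsa] at this
  have hRsymm : ∀ u v : R.domain, ⟪(R u : H), (v : H)⟫ = ⟪(u : H), R v⟫ := fun u v => hRF u v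
  have hdomRR : R.adjoint.domain = R.domain := by rw [hRsa]
  have hRmem : ∀ w : H, (∃ w' : H, ∀ v : R.domain, ⟪w', (v : H)⟫ = ⟪w, R v⟫) →
      w ∈ R.domain := by
    intro w h
    have := LinearPMap.mem_adjoint_domain_of_exists w h
    rwa [hdomRR] at this
  have hRval : ∀ (w : H) (hw : w ∈ R.domain) (w' : H),
      (∀ v : R.domain, ⟪w', (v : H)⟫ = ⟪w, R v⟫) → R ⟨w, hw⟩ = w' := by
    intro w hw w' h
    apply hdense'.eq_of_inner_left ℂ
    intro v' hv'
    obtain ⟨v, rfl⟩ : ∃ v : R.domain, (v : H) = v' := ⟨⟨v', hv'⟩, rfl⟩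
    rw [hRsymm ⟨w, hw⟩ v, ← h v]
  -- kernel facts
  have hker : ∀ x ∈ Mᗮ, ∃ hx : x ∈ R.domain, R ⟨x, hx⟩ = 0 := by
    intro x hx
    rw [hMorth] at hx
    have key : ∀ v : R.domain, ⟪(0 : H), (v : H)⟫ = ⟪x, R v⟫ := by
      intro v
      have h1 : ⟪(R v : H), x⟫ = 0 := hx _ ⟨v, rfl⟩
      rw [inner_zero_left, ← inner_conj_symm, h1, map_zero]
    have hxd : x ∈ R.domain := hRmem x ⟨0, key⟩
    exact ⟨hxd, hRval x hxd 0 key⟩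
  -- projection facts
  have hPM : ∀ x : H, ((Submodule.orthogonalProjection M x : M) : H) ∈ M := fun x =>
    (Submodule.orthogonalProjection M x).2
  have hPorth : ∀ x : H, x - (Submodule.orthogonalProjection M x : H) ∈ Mᗮ := fun x =>
    Submodule.sub_starProjection_mem_orthogonal (K := M) x
  have hPD : ∀ (x : H) (hx : x ∈ R.domain), ∃ hp : (Submodule.orthogonalProjection M x : H) ∈ R.domain,
      R ⟨(Submodule.orthogonalProjection M x : H), hp⟩ = R ⟨x, hx⟩ := by
    intro x hx
    obtain ⟨hk, hk0⟩ := hker _ (hPorth x)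
    have hp : (Submodule.orthogonalProjection M x : H) ∈ R.domain := by
      have hxx : (Submodule.orthogonalProjection M x : H) = x - (x - (Submodule.orthogonalProjection M x : H)) := by
        abel
      rw [hxx]; exact Submodule.sub_mem _ hx hk
    refine ⟨hp, ?_⟩
    have hsum : (⟨x, hx⟩ : R.domain) = ⟨_, hp⟩ + ⟨_, hk⟩ := by
      apply Subtype.ext
      simp
    rw [hsum, LinearPMap.map_add, hk0, add_zero]
  -- adjoint of T
  have hTadj_of : ∀ z : H, adjU z ∈ R.domain → z ∈ T.adjoint.domain := by
    intro z hz
    apply LinearPMap.mem_adjoint_domain_of_exists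
    refine ⟨R ⟨adjU z, hz⟩, ?_⟩
    intro x
    have hxR : (x : H) ∈ R.domain := hmem.1 x.2
    rw [hTUR x hxR, ← hadj_l]
    exact hRsymm ⟨adjU z, hz⟩ ⟨x, hxR⟩
  have hTadj_to : ∀ (z : H) (hz : z ∈ T.adjoint.domain), ∃ h2 : adjU z ∈ R.domain,
      R ⟨adjU z, h2⟩ = T.adjoint ⟨z, hz⟩ := by
    intro z hz
    have key : ∀ v : R.domain, ⟪(T.adjoint ⟨z, hz⟩ : H), (v : H)⟫ = ⟪adjU z, R v⟫ := by
      intro v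
      have hvT : (v : H) ∈ T.domain := hmem.2 v.2
      have hfa := LinearPMap.adjoint_isFormalAdjoint hdense (⟨z, hz⟩ : T.adjoint.domain) ⟨v, hvT⟩
      rw [hTUR ⟨v, hvT⟩ v.2] at hfa
      rw [hfa, ← hadj_l]
    have h2 : adjU z ∈ R.domain := hRmem _ ⟨_, fun v => key v⟩
    exact ⟨h2, hRval _ h2 _ (fun v => key v)⟩
  -- the key identities from C-selfadjointness
  have hstar1 : ∀ (y : H) (hy : y ∈ R.domain), ∃ hWy : adjU (C.toFun y) ∈ R.domain,
      R ⟨adjU (C.toFun y), hWy⟩ = C.toFun (U (R ⟨y, hy⟩)) := by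
    intro y hy
    obtain ⟨hCx, heq⟩ := hCsa.1 ⟨y, hmem.2 hy⟩
    obtain ⟨h2, hval⟩ := hTadj_to (C.toFun y) hCx
    refine ⟨h2, ?_⟩
    rw [hval]
    have hTy : (T ⟨y, hmem.2 hy⟩ : H) = U (R ⟨y, hy⟩) := hTUR _ hy
    rw [← hTy, ← heq, hCC]
  have hstar2 : ∀ y : H, adjU (C.toFun y) ∈ R.domain → y ∈ R.domain := fun y h =>
    hmem.1 (hCsa.2 y (hTadj_of (C.toFun y) h))
  -- J and W basic facts
  have hJcont : Continuous (fun x : H => C.toFun (U x)) := hCcont.comp U.continuous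
  have hMcoe : (M : Set H) = closure ((LinearMap.range R.toFun : Submodule ℂ H) : Set H) := by
    rw [hMdef]; exact Submodule.topologicalClosure_coe _
  have hJM : ∀ m ∈ M, C.toFun (U m) ∈ M := by
    intro m hm
    have hsub : (fun x : H => C.toFun (U x)) '' ((LinearMap.range R.toFun : Submodule ℂ H) : Set H)
        ⊆ ((LinearMap.range R.toFun : Submodule ℂ H) : Set H) := by
      rintro _ ⟨r, ⟨v, rfl⟩, rfl⟩
      obtain ⟨h2, hval⟩ := hstar1 (v : H) v.2
      refine ⟨⟨adjU (C.toFun (v : H)), h2⟩, ?_⟩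
      show (R ⟨adjU (C.toFun (v : H)), h2⟩ : H) = C.toFun (U (R.toFun v))
      exact hval
    have hm' : m ∈ closure ((LinearMap.range R.toFun : Submodule ℂ H) : Set H) := by
      rw [← hMcoe]; exact hm
    have h1 : C.toFun (U m) ∈ closure ((fun x : H => C.toFun (U x)) ''
        ((LinearMap.range R.toFun : Submodule ℂ H) : Set H)) :=
      image_closure_subset_closure_image hJcont ⟨m, hm', rfl⟩
    have h2 := closure_mono hsub h1
    rw [← hMcoe] at h2
    exact h2
  have hWJm : ∀ m ∈ M, adjU (C.toFun (C.toFun (U m))) = m := by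
    intro m hm
    rw [hCC]; exact hUUadj m hm
  have hJD : ∀ m ∈ M, m ∈ R.domain → C.toFun (U m) ∈ R.domain := by
    intro m hm hmD
    apply hstar2
    rw [hWJm m hm]
    exact hmD
  -- U ∘ adjU ∘ C = C on M
  have hUWC : ∀ m ∈ M, U (adjU (C.toFun m)) = C.toFun m := by
    intro m hm
    have hcont1 : Continuous (fun x : H => U (adjU (C.toFun x))) :=
      U.continuous.comp (adjU.continuous.comp hCcont)
    have heqon : Set.EqOn (fun x : H => U (adjU (C.toFun x))) C.toFun
        ((LinearMap.range R.toFun : Submodule ℂ H) : Set H) := by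
      rintro _ ⟨v, rfl⟩
      obtain ⟨hp, hpv⟩ := hPD (v : H) v.2
      have hpM := hPM (v : H)
      have hJp : C.toFun (U ((Submodule.orthogonalProjection M (v : H) : M) : H)) ∈ R.domain :=
        hJD _ hpM hp
      obtain ⟨h2, hval⟩ := hstar1 _ hJp
      -- hval : R ⟨adjU (C.toFun (C.toFun (U p))), _⟩ = C.toFun (U (R ⟨C.toFun (U p), hJp⟩))
      have hWJp : R ⟨adjU (C.toFun (C.toFun (U ((Submodule.orthogonalProjection M (v : H) : M) : H)))), h2⟩
          = R ⟨(v : H), v.2⟩ := by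
        rw [Rcongr (hWJm _ hpM) h2 hp]
        exact hpv
      have hCRv : C.toFun (R ⟨(v : H), v.2⟩)
          = U (R ⟨C.toFun (U ((Submodule.orthogonalProjection M (v : H) : M) : H)), hJp⟩) := by
        rw [← hWJp, hval, hCC]
      show U (adjU (C.toFun (R.toFun v))) = C.toFun (R.toFun v)
      have hRv : R.toFun v = R ⟨(v : H), v.2⟩ := rfl
      rw [hRv, hCRv, hUUadj _ (hranR _), ← hCRv]
    have heqon2 := heqon.closure hcont1 hCcont
    have hm' : m ∈ closure ((LinearMap.range R.toFun : Submodule ℂ H) : Set H) := by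
      rw [← hMcoe]; exact hm
    exact heqon2 hm'
  have hJWm : ∀ m ∈ M, C.toFun (U (adjU (C.toFun m))) = m := by
    intro m hm
    rw [hUWC m hm, hCC]
  have hJnorm : ∀ m ∈ M, ‖C.toFun (U m)‖ = ‖m‖ := by
    intro m hm; rw [hCnorm]; exact hUiso m hm
  have norm_of_inner : ∀ a b : H, ⟪a, a⟫ = ⟪b, b⟫ → ‖a‖ = ‖b‖ := by
    intro a b h
    rw [inner_self_eq_norm_sq_to_K, inner_self_eq_norm_sq_to_K] at h
    have h2 : ‖a‖ ^ 2 = ‖b‖ ^ 2 := by exact_mod_cast h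
    nlinarith [norm_nonneg a, norm_nonneg b]
  have hWnorm : ∀ m ∈ M, ‖adjU (C.toFun m)‖ = ‖m‖ := by
    intro m hm
    have h1 : ⟪adjU (C.toFun m), adjU (C.toFun m)⟫ = ⟪m, m⟫ := by
      rw [hadj_r, hUWC m hm, hCinner]
    exact norm_of_inner _ _ h1
  have hJinner : ∀ a b : H, a ∈ M → b ∈ M →
      ⟪C.toFun (U a), C.toFun (U b)⟫ = ⟪b, a⟫ := by
    intro a b ha hb
    rw [hCinner, hUinner b a hb ha]
  have hWinner : ∀ a b : H, a ∈ M → b ∈ M →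
      ⟪adjU (C.toFun a), adjU (C.toFun b)⟫ = ⟪b, a⟫ := by
    intro a b ha hb
    rw [hadj_r, hUWC a ha, hCinner]
  have hRJ : ∀ (m : H) (hm : m ∈ M) (hmD : m ∈ R.domain)
      (hJmD : C.toFun (U m) ∈ R.domain),
      R ⟨C.toFun (U m), hJmD⟩ = adjU (C.toFun (R ⟨m, hmD⟩)) := by
    intro m hm hmD hJmD
    obtain ⟨h2, hval⟩ := hstar1 _ hJmD
    have h3 : R ⟨m, hmD⟩ = C.toFun (U (R ⟨C.toFun (U m), hJmD⟩)) := by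
      rw [← hval]
      exact (Rcongr (hWJm m hm) h2 hmD).symm
    have h4 := hUUadj _ (hranR ⟨C.toFun (U m), hJmD⟩)
    rw [h3, hCC, h4]
  -- key quadratic form identity
  have hKI : ∀ (z : H) (hzM : z ∈ M) (hzD : z ∈ R.domain),
      ∀ (hJzD : C.toFun (U z) ∈ R.domain) (hWzD : adjU (C.toFun z) ∈ R.domain),
      (⟪((⟨_, hJzD⟩ - ⟨_, hWzD⟩ : R.domain) : H), (R (⟨_, hJzD⟩ - ⟨_, hWzD⟩ : R.domain) : H)⟫).re
        = (⟪C.toFun (U z), (R ⟨_, hJzD⟩ : H)⟫).re + (⟪adjU (C.toFun z), (R ⟨_, hWzD⟩ : H)⟫).re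
          - 2 * (⟪z, (R ⟨z, hzD⟩ : H)⟫).re := by
    intro z hzM hzD hJzD hWzD
    obtain ⟨hW2, hWval⟩ := hstar1 z hzD
    have hWval' : (R ⟨adjU (C.toFun z), hWzD⟩ : H) = C.toFun (U (R ⟨z, hzD⟩)) := by
      rw [← hWval]
    have hJval : (R ⟨C.toFun (U z), hJzD⟩ : H) = adjU (C.toFun (R ⟨z, hzD⟩)) :=
      hRJ z hzM hzD hJzD
    have hcoe : ((⟨_, hJzD⟩ - ⟨_, hWzD⟩ : R.domain) : H) = C.toFun (U z) - adjU (C.toFun z) :=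
      rfl
    have hRsub : (R (⟨_, hJzD⟩ - ⟨_, hWzD⟩ : R.domain) : H)
        = (R ⟨_, hJzD⟩ : H) - (R ⟨_, hWzD⟩ : H) := by
      rw [LinearPMap.map_sub]
    rw [hcoe, hRsub, inner_sub_left, inner_sub_right, inner_sub_right]
    -- cross terms
    have hcross1 : ⟪C.toFun (U z), (R ⟨adjU (C.toFun z), hWzD⟩ : H)⟫ = ⟪(R ⟨z, hzD⟩ : H), z⟫ := by
      rw [hWval', hCinner, hUinner _ _ (hranR _) hzM]
    have hcross2 : ⟪adjU (C.toFun z), (R ⟨C.toFun (U z), hJzD⟩ : H)⟫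
        = ⟪(R ⟨z, hzD⟩ : H), z⟫ := by
      rw [hJval, hWinner _ _ hzM (hranR ⟨z, hzD⟩)]
    have hsymmz : ⟪(R ⟨z, hzD⟩ : H), z⟫ = ⟪z, (R ⟨z, hzD⟩ : H)⟫ := hRsymm ⟨z, hzD⟩ ⟨z, hzD⟩
    rw [hcross1, hcross2, hsymmz]
    simp only [Complex.sub_re]
    ring
  -- Cauchy-Schwarz style: zero form value implies zero vector
  have hCS : ∀ v : R.domain, (⟪(v : H), (R v : H)⟫).re = 0 → (R v : H) = 0 := by
    intro v hv
    apply hdense'.eq_zero_of_inner_right ℂ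
    intro u' hu'
    obtain ⟨u, rfl⟩ : ∃ u : R.domain, (u : H) = u' := ⟨⟨u', hu'⟩, rfl⟩
    set β : ℂ := ⟪(u : H), (R v : H)⟫ with hβ
    set Q : ℝ := (⟪(u : H), (R u : H)⟫).re with hQ
    have hQ0 : 0 ≤ Q := hRpos u
    have hkey : ∀ t : ℝ, 0 < t → 2 * t * Complex.normSq β ≤ t ^ 2 * Q := by
      intro t ht
      set c : ℂ := -(starRingEnd ℂ β) with hc
      have h0 := hRpos ((t : ℂ) • u + c • v)
      have hcoe2 : (((t : ℂ) • u + c • v : R.domain) : H) = (t : ℂ) • (u : H) + c • (v : H) := rfl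
      have hR2 : (R ((t : ℂ) • u + c • v) : H) = (t : ℂ) • (R u : H) + c • (R v : H) := by
        rw [LinearPMap.map_add, LinearPMap.map_smul, LinearPMap.map_smul]
      rw [hcoe2, hR2] at h0
      have hvu : ⟪(v : H), (R u : H)⟫ = (starRingEnd ℂ) β := by
        rw [hβ, ← hRsymm u v, inner_conj_symm]
      have hexp : ⟪(t : ℂ) • (u : H) + c • (v : H), (t : ℂ) • (R u : H) + c • (R v : H)⟫
          = (starRingEnd ℂ (t : ℂ)) * (t : ℂ) * ⟪(u : H), (R u : H)⟫
            + (starRingEnd ℂ (t : ℂ)) * c * β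
            + (starRingEnd ℂ c) * (t : ℂ) * (starRingEnd ℂ β)
            + (starRingEnd ℂ c) * c * ⟪(v : H), (R v : H)⟫ := by
        simp only [inner_add_left, inner_add_right, inner_smul_left, inner_smul_right]
        rw [hvu, ← hβ]
        ring
      rw [hexp] at h0
      have hre : ((starRingEnd ℂ (t : ℂ)) * (t : ℂ) * ⟪(u : H), (R u : H)⟫
            + (starRingEnd ℂ (t : ℂ)) * c * β
            + (starRingEnd ℂ c) * (t : ℂ) * (starRingEnd ℂ β)
            + (starRingEnd ℂ c) * c * ⟪(v : H), (R v : H)⟫).re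
          = t ^ 2 * Q - 2 * t * Complex.normSq β
            + Complex.normSq β * (⟪(v : H), (R v : H)⟫).re := by
        rw [hc, hQ]
        simp only [Complex.add_re, Complex.mul_re, Complex.mul_im, Complex.conj_re,
          Complex.conj_im, Complex.ofReal_re, Complex.ofReal_im, Complex.neg_re, Complex.neg_im,
          Complex.normSq_apply]
        ring
      rw [hre, hv] at h0
      linarith
    by_contra hne
    have hB0 : 0 < Complex.normSq β := Complex.normSq_pos.mpr hne
    set t : ℝ := Complex.normSq β / (Q + 1) with htdef
    have ht : 0 < t := by positivity
    have h1 := hkey t ht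
    have h2 : t * Q ≤ Complex.normSq β := by
      rw [htdef, div_mul_eq_mul_div, div_le_iff₀ (by linarith)]
      nlinarith
    nlinarith [mul_le_mul_of_nonneg_left h2 (le_of_lt ht), mul_pos ht hB0]
  have qcongr : ∀ {a b : H} (_ : a = b) (ha : a ∈ R.domain) (hb : b ∈ R.domain),
      (⟪a, (R ⟨a, ha⟩ : H)⟫).re = (⟪b, (R ⟨b, hb⟩ : H)⟫).re := by
    intro a b h ha hb; cases h; rfl
  -- main step: J = W on M ∩ dom R
  have hEmain : ∀ (y : H), y ∈ M → ∀ hy : y ∈ R.domain,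
      C.toFun (U y) = adjU (C.toFun y) := by
    intro y hyM hyD
    set JF : H → H := fun x : H => C.toFun (U x) with hJF
    set WF : H → H := fun x : H => adjU (C.toFun x) with hWF
    have hJForb : ∀ n : ℕ, ∃ (_ : JF^[n] y ∈ M) (hD : JF^[n] y ∈ R.domain),
        ‖JF^[n] y‖ = ‖y‖ ∧ ‖(R ⟨JF^[n] y, hD⟩ : H)‖ = ‖(R ⟨y, hyD⟩ : H)‖ := by
      intro n
      induction n with
      | zero => exact ⟨hyM, hyD, rfl, rfl⟩
      | succ n ih =>
        obtain ⟨hM, hD, hn1, hn2⟩ := ih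
        have hit : JF^[n+1] y = JF (JF^[n] y) := Function.iterate_succ_apply' JF n y
        rw [hit]
        have hJDz : JF (JF^[n] y) ∈ R.domain := hJD _ hM hD
        refine ⟨hJM _ hM, hJDz, ?_, ?_⟩
        · rw [hJF]; rw [hJnorm _ hM, hn1]
        · have hv := hRJ _ hM hD hJDz
          rw [hv, hWnorm _ (hranR ⟨_, hD⟩), hn2]
    have hWForb : ∀ n : ℕ, ∃ (_ : WF^[n] y ∈ M) (hD : WF^[n] y ∈ R.domain),
        ‖WF^[n] y‖ = ‖y‖ ∧ ‖(R ⟨WF^[n] y, hD⟩ : H)‖ = ‖(R ⟨y, hyD⟩ : H)‖ := by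
      intro n
      induction n with
      | zero => exact ⟨hyM, hyD, rfl, rfl⟩
      | succ n ih =>
        obtain ⟨hM, hD, hn1, hn2⟩ := ih
        have hit : WF^[n+1] y = WF (WF^[n] y) := Function.iterate_succ_apply' WF n y
        rw [hit]
        have hWDz : WF (WF^[n] y) ∈ R.domain := (hstar1 _ hD).1
        refine ⟨hadjM _, hWDz, ?_, ?_⟩
        · rw [hWF]; rw [hWnorm _ hM, hn1]
        · have hv := (hstar1 _ hD).2
          rw [hv, hCnorm, hUiso _ (hranR ⟨_, hD⟩), hn2]
    set c : ℕ → ℝ := fun n =>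
      (⟪JF^[n] y, (R ⟨JF^[n] y, (hJForb n).choose_spec.choose⟩ : H)⟫).re with hc
    set d : ℕ → ℝ := fun n =>
      (⟪WF^[n] y, (R ⟨WF^[n] y, (hWForb n).choose_spec.choose⟩ : H)⟫).re with hd
    have hcbound : ∀ n, c n ≤ ‖y‖ * ‖(R ⟨y, hyD⟩ : H)‖ := by
      intro n
      obtain ⟨hM, hD, hn1, hn2⟩ := hJForb n
      have h1 : c n = (⟪JF^[n] y, (R ⟨JF^[n] y, hD⟩ : H)⟫).re := by rw [hc]
      have h2 := re_inner_le_norm (𝕜 := ℂ) (JF^[n] y) (R ⟨JF^[n] y, hD⟩ : H)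
      rw [RCLike.re_to_complex] at h2
      rw [h1]
      calc (⟪JF^[n] y, (R ⟨JF^[n] y, hD⟩ : H)⟫).re ≤ _ := h2
        _ = ‖y‖ * ‖(R ⟨y, hyD⟩ : H)‖ := by rw [hn1, hn2]
    have hdbound : ∀ n, d n ≤ ‖y‖ * ‖(R ⟨y, hyD⟩ : H)‖ := by
      intro n
      obtain ⟨hM, hD, hn1, hn2⟩ := hWForb n
      have h1 : d n = (⟪WF^[n] y, (R ⟨WF^[n] y, hD⟩ : H)⟫).re := by rw [hd]
      have h2 := re_inner_le_norm (𝕜 := ℂ) (WF^[n] y) (R ⟨WF^[n] y, hD⟩ : H)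
      rw [RCLike.re_to_complex] at h2
      rw [h1]
      calc (⟪WF^[n] y, (R ⟨WF^[n] y, hD⟩ : H)⟫).re ≤ _ := h2
        _ = ‖y‖ * ‖(R ⟨y, hyD⟩ : H)‖ := by rw [hn1, hn2]
    have hcconv : ∀ n, 2 * c (n + 1) ≤ c n + c (n + 2) := by
      intro n
      obtain ⟨hM0, hD0, _, _⟩ := hJForb n
      obtain ⟨hM1, hD1, _, _⟩ := hJForb (n + 1)
      set z : H := JF^[n+1] y with hzdef
      have hJzD : JF z ∈ R.domain := hJD z hM1 hD1
      have hWzD : WF z ∈ R.domain := (hstar1 z hD1).1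
      have hki := hKI z hM1 hD1 hJzD hWzD
      have hpos := hRpos ((⟨_, hJzD⟩ - ⟨_, hWzD⟩ : R.domain))
      have e1 : c (n + 1) = (⟪z, (R ⟨z, hD1⟩ : H)⟫).re := by rw [hc]
      have e2 : c (n + 2) = (⟪JF z, (R ⟨JF z, hJzD⟩ : H)⟫).re := by
        rw [hc]
        exact qcongr (Function.iterate_succ_apply' JF (n+1) y) _ _
      have hWzeq : WF z = JF^[n] y := by
        rw [hzdef, Function.iterate_succ_apply' JF n y]
        exact hWJm _ hM0
      have e0 : c n = (⟪WF z, (R ⟨WF z, hWzD⟩ : H)⟫).re := by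
        rw [hc]; exact (qcongr hWzeq _ _).symm
      rw [e0, e1, e2]
      linarith [hki, hpos]
    have hdconv : ∀ n, 2 * d (n + 1) ≤ d n + d (n + 2) := by
      intro n
      obtain ⟨hM0, hD0, _, _⟩ := hWForb n
      obtain ⟨hM1, hD1, _, _⟩ := hWForb (n + 1)
      set z : H := WF^[n+1] y with hzdef
      have hJzD : JF z ∈ R.domain := hJD z hM1 hD1
      have hWzD : WF z ∈ R.domain := (hstar1 z hD1).1
      have hki := hKI z hM1 hD1 hJzD hWzD
      have hpos := hRpos ((⟨_, hJzD⟩ - ⟨_, hWzD⟩ : R.domain))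
      have e1 : d (n + 1) = (⟪z, (R ⟨z, hD1⟩ : H)⟫).re := by rw [hd]
      have e2 : d (n + 2) = (⟪WF z, (R ⟨WF z, hWzD⟩ : H)⟫).re := by
        rw [hd]
        exact qcongr (Function.iterate_succ_apply' WF (n+1) y) _ _
      have hJzeq : JF z = WF^[n] y := by
        rw [hzdef, Function.iterate_succ_apply' WF n y]
        exact hJWm _ hM0
      have e0 : d n = (⟪JF z, (R ⟨JF z, hJzD⟩ : H)⟫).re := by
        rw [hd]; exact (qcongr hJzeq _ _).symm
      rw [e0, e1, e2]
      linarith [hki, hpos]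
    have hc10 := aux_convex_seq c (‖y‖ * ‖(R ⟨y, hyD⟩ : H)‖) hcbound hcconv
    have hd10 := aux_convex_seq d (‖y‖ * ‖(R ⟨y, hyD⟩ : H)‖) hdbound hdconv
    -- translate back
    have hJyD : JF y ∈ R.domain := hJD y hyM hyD
    have hWyD : WF y ∈ R.domain := (hstar1 y hyD).1
    have hcy1 : c 1 = (⟪JF y, (R ⟨JF y, hJyD⟩ : H)⟫).re := by
      rw [hc]; exact qcongr (congrFun (Function.iterate_one JF) y) _ _
    have hcy0 : c 0 = (⟪y, (R ⟨y, hyD⟩ : H)⟫).re := by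
      rw [hc]; exact qcongr (Function.iterate_zero_apply JF y) _ _
    have hdy1 : d 1 = (⟪WF y, (R ⟨WF y, hWyD⟩ : H)⟫).re := by
      rw [hd]; exact qcongr (congrFun (Function.iterate_one WF) y) _ _
    have hdy0 : d 0 = (⟪y, (R ⟨y, hyD⟩ : H)⟫).re := by
      rw [hd]; exact qcongr (Function.iterate_zero_apply WF y) _ _
    -- conclude the form vanishes on the difference
    have hki := hKI y hyM hyD hJyD hWyD
    have hpos := hRpos ((⟨_, hJyD⟩ - ⟨_, hWyD⟩ : R.domain))
    have hzero : (⟪(((⟨_, hJyD⟩ - ⟨_, hWyD⟩ : R.domain)) : H),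
        (R (⟨_, hJyD⟩ - ⟨_, hWyD⟩ : R.domain) : H)⟫).re = 0 := by
      have h1 : (⟪JF y, (R ⟨JF y, hJyD⟩ : H)⟫).re ≤ (⟪y, (R ⟨y, hyD⟩ : H)⟫).re := by
        rw [← hcy1, ← hcy0]; exact hc10
      have h2 : (⟪WF y, (R ⟨WF y, hWyD⟩ : H)⟫).re ≤ (⟪y, (R ⟨y, hyD⟩ : H)⟫).re := by
        rw [← hdy1, ← hdy0]; exact hd10
      linarith [hki, hpos]
    have hRzero : (R (⟨_, hJyD⟩ - ⟨_, hWyD⟩ : R.domain) : H) = 0 := hCS _ hzero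
    -- the difference is in M and in Mᗮ, hence zero
    have hdM : JF y - WF y ∈ M := Submodule.sub_mem M (hJM y hyM) (hadjM _)
    have hdO : JF y - WF y ∈ Mᗮ := by
      rw [hMorth, Submodule.mem_orthogonal]
      rintro w ⟨v, rfl⟩
      have h3 : R.toFun v = (R v : H) := rfl
      have h4 : JF y - WF y = (((⟨_, hJyD⟩ - ⟨_, hWyD⟩ : R.domain)) : H) := rfl
      rw [h3, h4, hRsymm v (⟨_, hJyD⟩ - ⟨_, hWyD⟩ : R.domain), hRzero, inner_zero_right]
    have h5 : ⟪JF y - WF y, JF y - WF y⟫ = 0 := by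
      rw [Submodule.mem_orthogonal] at hdO
      exact hdO _ hdM
    rw [inner_self_eq_zero, sub_eq_zero] at h5
    exact h5
  -- extend J = W to all of M by continuity
  have hPcont : Continuous (fun x : H => ((Submodule.orthogonalProjection M x : M) : H)) :=
    continuous_subtype_val.comp (Submodule.orthogonalProjection M).continuous
  have hJWM : ∀ m ∈ M, C.toFun (U m) = adjU (C.toFun m) := by
    intro m hm
    have heq : (fun x : H => C.toFun (U ((Submodule.orthogonalProjection M x : M) : H)))
        = fun x : H => adjU (C.toFun ((Submodule.orthogonalProjection M x : M) : H)) := by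
      apply Continuous.ext_on hdense'
      · exact hJcont.comp hPcont
      · exact (adjU.continuous.comp hCcont).comp hPcont
      · intro x hx
        obtain ⟨hp, _⟩ := hPD x hx
        exact hEmain _ (hPM x) hp
    have h1 := congrFun heq m
    have h2 : ((Submodule.orthogonalProjection M m : M) : H) = m := by
      exact (Submodule.starProjection_eq_self_iff (K := M)).mpr hm
    rw [h2] at h1
    exact h1
  -- decomposition fact: J x = W (P x) for every x
  have hJP : ∀ x : H, C.toFun (U x) = adjU (C.toFun ((Submodule.orthogonalProjection M x : M) : H)) := by
    intro x
    have hUx : U x = U ((Submodule.orthogonalProjection M x : M) : H) := by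
      have hx : x = ((Submodule.orthogonalProjection M x : M) : H) + (x - (Submodule.orthogonalProjection M x : M)) := by
        abel
      conv_lhs => rw [hx]
      rw [map_add, hUker _ (hPorth x), add_zero]
    rw [hUx, hJWM _ (hPM x)]
  -- assemble the result
  refine ⟨fun x : H => C.toFun (U x), ?_, ?_, ?_, ?_, ?_, ?_, ?_, ?_, ?_⟩
  · intro x y
    dsimp only
    rw [map_add, C.map_add']
  · intro a x
    dsimp only
    rw [map_smul, C.map_smul']
  · intro f hf g hg
    dsimp only
    exact hJinner f g hf hg
  · intro x hx
    dsimp only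
    rw [hUker x hx, hC0]
  · intro x hx
    dsimp only
    have h1 : C.toFun (U x) = adjU (C.toFun x) := hJWM x hx
    rw [h1]
    exact hJWm x hx
  · intro x hx
    dsimp only
    rw [hUker x hx, hC0, map_zero, hC0]
  · intro x
    dsimp only
    rw [hCC]
  · intro x
    dsimp only
    constructor
    · intro hx
      obtain ⟨hp, _⟩ := hPD x hx
      rw [hJP x]
      exact (hstar1 _ hp).1
    · intro hx
      rw [hJP x] at hx
      have hp : ((Submodule.orthogonalProjection M x : M) : H) ∈ R.domain := hstar2 _ hx
      obtain ⟨hk, _⟩ := hker _ (hPorth x)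
      have hxx : x = ((Submodule.orthogonalProjection M x : M) : H) + (x - (Submodule.orthogonalProjection M x : M)) := by
        abel
      rw [hxx]
      exact Submodule.add_mem _ hp hk
  · intro x hx
    dsimp only
    dsimp only at hx
    obtain ⟨hp, hpv⟩ := hPD (x : H) x.2
    obtain ⟨h2, hval⟩ := hstar1 _ hp
    have hval2 : (R ⟨adjU (C.toFun ((Submodule.orthogonalProjection M (x : H) : M) : H)), h2⟩ : H)
        = C.toFun (U (R x)) := by
      rw [hval, hpv]
    rw [← hval2]
    exact (Rcongr (hJP (x : H)) hx h2).symm
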